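/- Denote by BSR_simple(m,n) the maximum SOS rank over simple m×n biquadratic forms. For m, n ≥ 3: BSR_simple(m, n+1) ≥ BSR_simple(m, n) + 1, and by induction BSR_simple(m, n) ≥ m + n for all m, n ≥ 3. -/

import Mathlib

/-- `L` gives an SOS decomposition of the biquadratic form `P` into `R` squares
of bilinear forms. -/
def IsSOSDecomp (m n R : ℕ) (P : (Fin m → ℝ) → (Fin n → ℝ) → ℝ)
    (L : Fin R → Fin m → Fin n → ℝ) : Prop :=
  ∀ x y, P x y = ∑ t, (∑ i, ∑ j, L t i j * x i * y j)^2

/-- The SOS rank: the minimal number of squares of bilinear forms summing to `P`. -/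
noncomputable def sosRank (m n : ℕ) (P : (Fin m → ℝ) → (Fin n → ℝ) → ℝ) : ℕ :=
  sInf {R | ∃ L : Fin R → Fin m → Fin n → ℝ, IsSOSDecomp m n R P L}

/-- The simple biquadratic form with support `S`. -/
def simpleForm (m n : ℕ) (S : Finset (Fin m × Fin n)) :
    (Fin m → ℝ) → (Fin n → ℝ) → ℝ :=
  fun x y => ∑ p ∈ S, (x p.1)^2 * (y p.2)^2

/-- `BSR_simple(m,n)`: the maximum SOS rank over simple `m×n` biquadratic forms. -/
noncomputable def BSRsimple (m n : ℕ) : ℕ :=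
  sSup {R | ∃ S : Finset (Fin m × Fin n), sosRank m n (simpleForm m n S) = R}

open Finset Matrix

/-- every simple form has a decomposition with `m*n` squares -/
lemma exists_decomp (m n : ℕ) (S : Finset (Fin m × Fin n)) :
    ∃ L : Fin (m*n) → Fin m → Fin n → ℝ, IsSOSDecomp m n (m*n) (simpleForm m n S) L := by
  classical
  let e : Fin m × Fin n ≃ Fin (m*n) := finProdFinEquiv
  refine ⟨fun t i j => if ((i,j) ∈ S ∧ (i,j) = e.symm t) then 1 else 0, fun x y => ?_⟩
  rw [← Equiv.sum_comp e (fun t => (∑ i, ∑ j, (if ((i,j) ∈ S ∧ (i,j) = e.symm t) then (1:ℝ) else 0) * x i * y j)^2)]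
  have key : ∀ p : Fin m × Fin n,
      (∑ i, ∑ j, (if ((i,j) ∈ S ∧ (i,j) = e.symm (e p)) then (1:ℝ) else 0) * x i * y j)
      = if p ∈ S then x p.1 * y p.2 else 0 := by
    intro p
    simp only [Equiv.symm_apply_apply]
    have : ∀ i j, ((i,j) ∈ S ∧ (i,j) = p) ↔ (i = p.1 ∧ (j = p.2 ∧ p ∈ S)) := by
      intro i j; constructor
      · rintro ⟨h1, h2⟩; subst h2; exact ⟨rfl, rfl, h1⟩
      · rintro ⟨h1, h2, h3⟩; subst h1; subst h2; exact ⟨h3, rfl⟩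
    simp [this, ite_and, Finset.sum_ite_eq', mul_comm]
  rw [Finset.sum_congr rfl (fun p _ => by rw [key p])]
  simp [simpleForm, apply_ite (·^2), Finset.sum_ite_mem, mul_pow]

lemma sosRank_simple_le (m n : ℕ) (S : Finset (Fin m × Fin n)) :
    sosRank m n (simpleForm m n S) ≤ m * n := by
  obtain ⟨L, hL⟩ := exists_decomp m n S
  exact Nat.sInf_le ⟨L, hL⟩

lemma decompSet_nonempty (m n : ℕ) (S : Finset (Fin m × Fin n)) :
    {R | ∃ L : Fin R → Fin m → Fin n → ℝ, IsSOSDecomp m n R (simpleForm m n S) L}.Nonempty :=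
  ⟨m * n, exists_decomp m n S⟩

lemma exists_min_decomp (m n : ℕ) (S : Finset (Fin m × Fin n)) :
    ∃ L : Fin (sosRank m n (simpleForm m n S)) → Fin m → Fin n → ℝ,
      IsSOSDecomp m n (sosRank m n (simpleForm m n S)) (simpleForm m n S) L :=
  Nat.sInf_mem (decompSet_nonempty m n S)

lemma bddAbove_BSRset (m n : ℕ) :
    BddAbove {R | ∃ S : Finset (Fin m × Fin n), sosRank m n (simpleForm m n S) = R} := by
  refine ⟨m * n, fun R hR => ?_⟩
  obtain ⟨S, rfl⟩ := hR
  exact sosRank_simple_le m n S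

lemma le_BSR (m n : ℕ) (S : Finset (Fin m × Fin n)) :
    sosRank m n (simpleForm m n S) ≤ BSRsimple m n :=
  le_csSup (bddAbove_BSRset m n) ⟨S, rfl⟩

lemma exists_max (m n : ℕ) :
    ∃ S : Finset (Fin m × Fin n), sosRank m n (simpleForm m n S) = BSRsimple m n := by
  have h : sosRank m n (simpleForm m n (∅ : Finset (Fin m × Fin n)))
      ∈ {R | ∃ S : Finset (Fin m × Fin n), sosRank m n (simpleForm m n S) = R} := ⟨∅, rfl⟩
  exact Nat.sSup_mem ⟨_, h⟩ (bddAbove_BSRset m n)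

lemma bil_lincomb {m n R R' : ℕ} (A : Fin R' → Fin R → ℝ) (L : Fin R → Fin m → Fin n → ℝ)
    (s : Fin R') (x : Fin m → ℝ) (y : Fin n → ℝ) :
    ∑ i, ∑ j, (∑ t, A s t * L t i j) * x i * y j
      = ∑ t, A s t * (∑ i, ∑ j, L t i j * x i * y j) := by
  simp only [Finset.sum_mul, Finset.mul_sum]
  trans ∑ i, ∑ t, ∑ j, A s t * L t i j * x i * y j
  · exact Finset.sum_congr rfl fun i _ => Finset.sum_comm
  rw [Finset.sum_comm]
  refine Finset.sum_congr rfl fun t _ => ?_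
  refine Finset.sum_congr rfl fun i _ => ?_
  refine Finset.sum_congr rfl fun j _ => ?_
  ring

lemma sum_sq_mulVec {R' R : ℕ} (A : Matrix (Fin R') (Fin R) ℝ) (w : Fin R → ℝ) :
    ∑ s, (∑ t, A s t * w t)^2 = ∑ t, ∑ u, (Aᵀ * A) t u * w t * w u := by
  simp only [pow_two, Finset.sum_mul_sum, Matrix.mul_apply, Matrix.transpose_apply,
    Finset.sum_mul, Finset.mul_sum]
  rw [Finset.sum_comm]
  refine Finset.sum_congr rfl fun t _ => ?_
  rw [Finset.sum_comm]
  refine Finset.sum_congr rfl fun u _ => ?_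
  refine Finset.sum_congr rfl fun s _ => ?_
  ring

lemma G_quadform {R : ℕ} (d w : Fin R → ℝ) :
    ∑ t, ∑ u, ((1 + Matrix.vecMulVec d d) : Matrix (Fin R) (Fin R) ℝ) t u * w t * w u
      = (∑ t, w t ^ 2) + (∑ t, d t * w t)^2 := by
  have expand : ∀ t u : Fin R,
      ((1 + Matrix.vecMulVec d d) : Matrix (Fin R) (Fin R) ℝ) t u * w t * w u
        = (if t = u then w t * w u else 0) + (d t * w t) * (d u * w u) := by
    intro t u
    simp only [Matrix.add_apply, Matrix.one_apply, Matrix.vecMulVec_apply]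
    split <;> ring
  simp only [expand, Finset.sum_add_distrib]
  congr 1
  · simp [Finset.sum_ite_eq, pow_two]
  · rw [pow_two, Finset.sum_mul_sum]

open scoped MatrixOrder in
lemma reduce {m n R : ℕ} (P : (Fin m → ℝ) → (Fin n → ℝ) → ℝ)
    (L : Fin (R+1) → Fin m → Fin n → ℝ)
    (hL : IsSOSDecomp m n (R+1) P L) (c : Fin (R+1) → ℝ) (t0 : Fin (R+1)) (hc : c t0 ≠ 0)
    (hker : ∀ (x : Fin m → ℝ) (y : Fin n → ℝ), ∑ t, c t * (∑ i, ∑ j, L t i j * x i * y j) = 0) :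
    ∃ L' : Fin R → Fin m → Fin n → ℝ, IsSOSDecomp m n R P L' := by
  classical
  set e := Equiv.swap t0 (Fin.last R) with he
  set L₁ : Fin (R+1) → Fin m → Fin n → ℝ := fun t => L (e t) with hL₁
  set c₁ : Fin (R+1) → ℝ := fun t => c (e t) with hc₁
  have hL1 : IsSOSDecomp m n (R+1) P L₁ := by
    intro x y; rw [hL x y]
    exact (Equiv.sum_comp e fun t => (∑ i, ∑ j, L t i j * x i * y j)^2).symm
  have hker1 : ∀ (x : Fin m → ℝ) (y : Fin n → ℝ), ∑ t, c₁ t * (∑ i, ∑ j, L₁ t i j * x i * y j) = 0 := by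
    intro x y
    rw [Equiv.sum_comp e fun t => c t * (∑ i, ∑ j, L t i j * x i * y j)]
    exact hker x y
  have hclast : c₁ (Fin.last R) ≠ 0 := by
    simpa [hc₁, he, Equiv.swap_apply_right] using hc
  set M : Fin (R+1) → (Fin m → ℝ) → (Fin n → ℝ) → ℝ :=
    fun t x y => ∑ i, ∑ j, L₁ t i j * x i * y j with hM
  set d : Fin R → ℝ := fun t => -(c₁ t.castSucc) / c₁ (Fin.last R) with hd
  have hlast : ∀ (x : Fin m → ℝ) (y : Fin n → ℝ), M (Fin.last R) x y = ∑ t : Fin R, d t * M t.castSucc x y := by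
    intro x y
    have h := hker1 x y
    rw [Fin.sum_univ_castSucc] at h
    have h2 : ∑ t : Fin R, c₁ t.castSucc * M t.castSucc x y
        + c₁ (Fin.last R) * M (Fin.last R) x y = 0 := h
    have hsum : ∑ t : Fin R, d t * M t.castSucc x y
        = (-(∑ t : Fin R, c₁ t.castSucc * M t.castSucc x y)) / c₁ (Fin.last R) := by
      rw [← Finset.sum_neg_distrib, Finset.sum_div]
      refine Finset.sum_congr rfl fun t _ => ?_
      rw [hd]
      field_simp
    rw [hsum, eq_div_iff hclast]
    linarith [h2]
  set G : Matrix (Fin R) (Fin R) ℝ := 1 + Matrix.vecMulVec d d with hG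
  have hGsym : G.IsHermitian := by
    refine Matrix.IsHermitian.add Matrix.isHermitian_one ?_
    ext i j
    simp [Matrix.conjTranspose_apply, Matrix.vecMulVec_apply, mul_comm]
  have hGpsd : G.PosSemidef := by
    refine .of_dotProduct_mulVec_nonneg hGsym fun v => ?_
    have hv : star v ⬝ᵥ (G *ᵥ v) = ∑ t, ∑ u, G t u * v t * v u := by
      simp only [star_trivial, dotProduct, Matrix.mulVec, dotProduct, Finset.mul_sum]
      refine Finset.sum_congr rfl fun t _ => Finset.sum_congr rfl fun u _ => by ring
    rw [hv, hG, G_quadform]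
    positivity
  set A := CFC.sqrt G with hA
  have hAA : A * A = G := CFC.sqrt_mul_sqrt_self G hGpsd.nonneg
  have hAsym : Aᵀ = A := by
    rw [← Matrix.conjTranspose_eq_transpose_of_trivial]
    exact (CFC.sqrt_nonneg G).posSemidef.isHermitian
  refine ⟨fun s i j => ∑ t, A s t * L₁ t.castSucc i j, fun x y => ?_⟩
  set w : Fin R → ℝ := fun t => M t.castSucc x y with hw
  calc P x y = ∑ t : Fin (R+1), (M t x y)^2 := hL1 x y
    _ = (∑ t : Fin R, (w t)^2) + (M (Fin.last R) x y)^2 := Fin.sum_univ_castSucc _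
    _ = (∑ t : Fin R, (w t)^2) + (∑ t, d t * w t)^2 := by rw [hlast]
    _ = ∑ t, ∑ u, G t u * w t * w u := (G_quadform d w).symm
    _ = ∑ t, ∑ u, (Aᵀ * A) t u * w t * w u := by rw [hAsym, hAA]
    _ = ∑ s, (∑ t, A s t * w t)^2 := (sum_sq_mulVec A w).symm
    _ = ∑ s : Fin R, (∑ i, ∑ j, (∑ t, A s t * L₁ t.castSucc i j) * x i * y j)^2 := by
        refine Finset.sum_congr rfl fun s _ => ?_
        rw [bil_lincomb (fun s t => A s t) (fun t => L₁ t.castSucc) s x y]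

def unit {k : ℕ} (i : Fin k) : Fin k → ℝ := fun a => if a = i then 1 else 0

lemma sum_mul_unit {k : ℕ} (F : Fin k → ℝ) (i : Fin k) : (∑ a, F a * unit i a) = F i := by
  simp [unit, mul_ite, Finset.sum_ite_eq']

lemma bil_unit {m n R : ℕ} (L : Fin R → Fin m → Fin n → ℝ) (t : Fin R) (i0 : Fin m) (j0 : Fin n) :
    (∑ i, ∑ j, L t i j * unit i0 i * unit j0 j) = L t i0 j0 := by
  simp [unit, mul_ite, ite_mul, zero_mul, Finset.sum_ite_eq']

lemma step_core (m n : ℕ) (i₀ : Fin m) (S : Finset (Fin m × Fin n)) (R' : ℕ)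
    (L : Fin R' → Fin m → Fin (n+1) → ℝ)
    (hdec : IsSOSDecomp m (n+1) R' (simpleForm m (n+1)
      (insert (i₀, Fin.last n) (S.image fun p => (p.1, p.2.castSucc)))) L) :
    sosRank m n (simpleForm m n S) + 1 ≤ R' := by
  classical
  set S' : Finset (Fin m × Fin (n+1)) :=
    insert (i₀, Fin.last n) (S.image fun p => (p.1, p.2.castSucc)) with hS'
  set M : Fin R' → (Fin m → ℝ) → (Fin n → ℝ) → ℝ :=
    fun t x y => ∑ i, ∑ j : Fin n, L t i j.castSucc * x i * y j with hM
  set N : Fin R' → (Fin m → ℝ) → ℝ := fun t x => ∑ i, L t i (Fin.last n) * x i with hN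
  -- splitting the bilinear forms
  have split : ∀ (t : Fin R') (x : Fin m → ℝ) (y : Fin n → ℝ) (c : ℝ),
      (∑ i, ∑ j : Fin (n+1), L t i j * x i * (Fin.snoc y c : Fin (n+1) → ℝ) j)
        = M t x y + c * N t x := by
    intro t x y c
    have h1 : ∀ i : Fin m, (∑ j : Fin (n+1), L t i j * x i * (Fin.snoc y c : Fin (n+1) → ℝ) j)
        = (∑ j : Fin n, L t i j.castSucc * x i * y j) + L t i (Fin.last n) * x i * c := by
      intro i
      rw [Fin.sum_univ_castSucc]
      simp
    rw [Finset.sum_congr rfl fun i _ => h1 i, Finset.sum_add_distrib]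
    congr 1
    rw [Finset.mul_sum]
    exact Finset.sum_congr rfl fun i _ => by ring
  -- the form identity
  have formid : ∀ (x : Fin m → ℝ) (y' : Fin (n+1) → ℝ),
      simpleForm m (n+1) S' x y'
        = simpleForm m n S x (fun j => y' j.castSucc) + (x i₀)^2 * (y' (Fin.last n))^2 := by
    intro x y'
    have hnotmem : (i₀, Fin.last n) ∉ S.image (fun p => (p.1, p.2.castSucc)) := by
      simp only [Finset.mem_image, not_exists]
      rintro p ⟨hp, heq⟩
      have : p.2.castSucc = Fin.last n := congrArg Prod.snd heq
      exact absurd this (Fin.castSucc_lt_last p.2).ne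
    have hinj : Set.InjOn (fun p : Fin m × Fin n => (p.1, p.2.castSucc)) S := by
      rintro ⟨a, b⟩ - ⟨a', b'⟩ - h
      simp only [Prod.mk.injEq] at h
      exact Prod.ext h.1 (Fin.castSucc_injective n h.2)
    simp only [simpleForm, hS', Finset.sum_insert hnotmem, Finset.sum_image hinj]
    ring
  -- the main identity with a free parameter c
  have identity : ∀ (x : Fin m → ℝ) (y : Fin n → ℝ) (c : ℝ),
      simpleForm m n S x y + (x i₀)^2 * c^2 = ∑ t, (M t x y + c * N t x)^2 := by
    intro x y c
    calc simpleForm m n S x y + (x i₀)^2 * c^2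
        = simpleForm m (n+1) S' x (Fin.snoc y c) := by
          rw [formid]; simp
      _ = ∑ t, (∑ i, ∑ j : Fin (n+1), L t i j * x i * (Fin.snoc y c : Fin (n+1) → ℝ) j)^2 :=
          hdec x _
      _ = ∑ t, (M t x y + c * N t x)^2 := Finset.sum_congr rfl fun t _ => by rw [split]
  have h0 : ∀ (x : Fin m → ℝ) (y : Fin n → ℝ),
      simpleForm m n S x y = ∑ t, (M t x y)^2 := by
    intro x y
    have h := identity x y 0
    simpa using h
  -- quadratic-in-c analysis
  have key : ∀ (x : Fin m → ℝ) (y : Fin n → ℝ) (c : ℝ),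
      2*c*(∑ t, M t x y * N t x) + c^2*(∑ t, (N t x)^2) = (x i₀)^2 * c^2 := by
    intro x y c
    have e := identity x y c
    have e0 := h0 x y
    have expand : ∑ t, (M t x y + c * N t x)^2
        = (∑ t, (M t x y)^2) + (2*c*(∑ t, M t x y * N t x) + c^2*(∑ t, (N t x)^2)) := by
      rw [Finset.sum_congr rfl (fun t _ =>
        show (M t x y + c * N t x)^2
          = (M t x y)^2 + ((2*c)*(M t x y * N t x) + c^2*((N t x)^2)) by ring)]
      simp only [Finset.sum_add_distrib, ← Finset.mul_sum]
    rw [expand] at e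
    linarith
  have hMN : ∀ (x : Fin m → ℝ) (y : Fin n → ℝ), (∑ t, M t x y * N t x) = 0 := by
    intro x y
    have k1 := key x y 1
    have k2 := key x y (-1)
    norm_num at k1 k2
    linarith
  have hNsq : ∀ (x : Fin m → ℝ), (∑ t, (N t x)^2) = (x i₀)^2 := by
    intro x
    have k1 := key x (fun _ => 0) 1
    have hmn := hMN x (fun _ => 0)
    rw [hmn] at k1
    norm_num at k1
    exact k1
  -- N t evaluated at unit vectors
  have hNunit : ∀ (t : Fin R') (i : Fin m), N t (unit i) = L t i (Fin.last n) := by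
    intro t i
    exact sum_mul_unit (fun a => L t a (Fin.last n)) i
  have hNzero : ∀ (i : Fin m), i ≠ i₀ → ∀ t, L t i (Fin.last n) = 0 := by
    intro i hi t
    have h := hNsq (unit i)
    have hu : unit i i₀ = (0:ℝ) := by simp [unit, Ne.symm hi]
    rw [hu] at h
    norm_num at h
    have h2 := (Finset.sum_eq_zero_iff_of_nonneg (fun t _ => sq_nonneg (N t (unit i)))).mp h
      t (Finset.mem_univ t)
    have h3 : N t (unit i) = 0 := by
      have := sq_eq_zero_iff.mp h2
      exact this
    rw [hNunit] at h3
    exact h3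
  set cv : Fin R' → ℝ := fun t => L t i₀ (Fin.last n) with hcvdef
  have hcv : ∑ t, (cv t)^2 = 1 := by
    have h := hNsq (unit i₀)
    have hu : unit i₀ i₀ = (1:ℝ) := by simp [unit]
    rw [hu] at h
    norm_num at h
    calc ∑ t, (cv t)^2 = ∑ t, (N t (unit i₀))^2 :=
          Finset.sum_congr rfl fun t _ => by rw [hNunit]
      _ = 1 := h
  have hNform : ∀ (t : Fin R') (x : Fin m → ℝ), N t x = cv t * x i₀ := by
    intro t x
    show (∑ i, L t i (Fin.last n) * x i) = cv t * x i₀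
    rw [Finset.sum_eq_single i₀ (fun b _ hb => by rw [hNzero b hb t, zero_mul])
      (fun h => absurd (Finset.mem_univ i₀) h)]
  -- the kernel relation
  have hxQ : ∀ (x : Fin m → ℝ) (y : Fin n → ℝ), (∑ t, cv t * M t x y) * x i₀ = 0 := by
    intro x y
    have h := hMN x y
    rw [Finset.sum_mul]
    rw [Finset.sum_congr rfl (fun t (_ : t ∈ Finset.univ) =>
      show cv t * M t x y * x i₀ = M t x y * N t x by rw [hNform]; ring)]
    exact h
  have Meval : ∀ (t : Fin R') (i : Fin m) (j : Fin n), M t (unit i) (unit j) = L t i j.castSucc :=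
    fun t i j => bil_unit (fun t i j => L t i j.castSucc) t i j
  have Madd : ∀ (t : Fin R') (x x' : Fin m → ℝ) (y : Fin n → ℝ),
      M t (fun a => x a + x' a) y = M t x y + M t x' y := by
    intro t x x' y
    rw [hM]
    simp only
    rw [Finset.sum_congr rfl (fun i (_ : i ∈ Finset.univ) => Finset.sum_congr rfl
      (fun j (_ : j ∈ Finset.univ) =>
        show L t i j.castSucc * (x i + x' i) * y j
          = L t i j.castSucc * x i * y j + L t i j.castSucc * x' i * y j by ring))]
    simp [Finset.sum_add_distrib]
  have hK0 : ∀ j : Fin n, (∑ t, cv t * L t i₀ j.castSucc) = 0 := by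
    intro j
    have h := hxQ (unit i₀) (unit j)
    have hu : unit i₀ i₀ = (1:ℝ) := by simp [unit]
    rw [hu, mul_one] at h
    rw [Finset.sum_congr rfl fun t _ => by rw [← Meval t i₀ j]]
    exact h
  have hK : ∀ (i : Fin m) (j : Fin n), (∑ t, cv t * L t i j.castSucc) = 0 := by
    intro i j
    by_cases hi : i = i₀
    · rw [hi]; exact hK0 j
    · have h := hxQ (fun a => unit i a + unit i₀ a) (unit j)
      have hu : unit i i₀ + unit i₀ i₀ = (1:ℝ) := by simp [unit, Ne.symm hi]
      rw [hu, mul_one] at h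
      rw [Finset.sum_congr rfl (fun t (_ : t ∈ Finset.univ) => by
        rw [Madd t (unit i) (unit i₀) (unit j), Meval, Meval])] at h
      rw [Finset.sum_congr rfl (fun t (_ : t ∈ Finset.univ) =>
        show cv t * (L t i j.castSucc + L t i₀ j.castSucc)
          = cv t * L t i j.castSucc + cv t * L t i₀ j.castSucc by ring)] at h
      rw [Finset.sum_add_distrib, hK0 j, add_zero] at h
      exact h
  have hker : ∀ (x : Fin m → ℝ) (y : Fin n → ℝ),
      ∑ t, cv t * (∑ i, ∑ j : Fin n, L t i j.castSucc * x i * y j) = 0 := by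
    intro x y
    have hQform := (bil_lincomb (fun (_ : Fin 1) t => cv t)
      (fun t i j => L t i j.castSucc) 0 x y).symm
    rw [hQform]
    rw [Finset.sum_congr rfl (fun i (_ : i ∈ Finset.univ) => Finset.sum_congr rfl
      (fun j (_ : j ∈ Finset.univ) => by rw [hK i j, zero_mul, zero_mul]))]
    simp
  -- R' is positive
  have hpos : 0 < R' := by
    rcases Nat.eq_zero_or_pos R' with h | h
    · subst h
      simp at hcv
    · exact h
  obtain ⟨R'', rfl⟩ : ∃ k, R' = k + 1 := ⟨R' - 1, (Nat.succ_pred_eq_of_pos hpos).symm⟩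
  obtain ⟨t0, ht0⟩ : ∃ t, cv t ≠ 0 := by
    by_contra hall
    push_neg at hall
    simp only [hall] at hcv
    norm_num at hcv
  obtain ⟨L', hL'⟩ := reduce (simpleForm m n S) (fun t i j => L t i j.castSucc)
    (fun x y => h0 x y) cv t0 ht0 hker
  have : sosRank m n (simpleForm m n S) ≤ R'' := Nat.sInf_le ⟨L', hL'⟩
  omega

lemma decomp_swap {m n R : ℕ} (S : Finset (Fin m × Fin n)) (L : Fin R → Fin m → Fin n → ℝ)
    (hL : IsSOSDecomp m n R (simpleForm m n S) L) :
    IsSOSDecomp n m R (simpleForm n m (S.image Prod.swap)) (fun t j i => L t i j) := by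
  intro y x
  have hform : simpleForm n m (S.image Prod.swap) y x = simpleForm m n S x y := by
    unfold simpleForm
    rw [Finset.sum_image (fun p _ q _ h => Prod.swap_injective h)]
    exact Finset.sum_congr rfl fun p _ => by simp [mul_comm]
  rw [hform, hL x y]
  refine Finset.sum_congr rfl fun t _ => ?_
  congr 1
  rw [Finset.sum_comm]
  exact Finset.sum_congr rfl fun i _ => Finset.sum_congr rfl fun j _ => by ring

lemma sosRank_swap (m n : ℕ) (S : Finset (Fin m × Fin n)) :
    sosRank n m (simpleForm n m (S.image Prod.swap)) = sosRank m n (simpleForm m n S) := by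
  have hsub : ∀ (m n : ℕ) (S : Finset (Fin m × Fin n)),
      sosRank n m (simpleForm n m (S.image Prod.swap)) ≤ sosRank m n (simpleForm m n S) := by
    intro m n S
    obtain ⟨L, hL⟩ := exists_min_decomp m n S
    exact Nat.sInf_le ⟨_, decomp_swap S L hL⟩
  have h1 := hsub m n S
  have h2 := hsub n m (S.image Prod.swap)
  rw [Finset.image_image] at h2
  have : (S.image (Prod.swap ∘ Prod.swap)) = S := by
    simp [Function.comp_def]
  rw [this] at h2
  omega

lemma BSR_swap (m n : ℕ) : BSRsimple m n = BSRsimple n m := by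
  unfold BSRsimple
  congr 1
  ext R
  constructor
  · rintro ⟨S, rfl⟩
    exact ⟨S.image Prod.swap, sosRank_swap m n S⟩
  · rintro ⟨S, rfl⟩
    exact ⟨S.image Prod.swap, sosRank_swap n m S⟩

lemma BSR_step (m n : ℕ) (hm : 0 < m) : BSRsimple m n + 1 ≤ BSRsimple m (n+1) := by
  obtain ⟨S, hS⟩ := exists_max m n
  set i₀ : Fin m := ⟨0, hm⟩
  set S' : Finset (Fin m × Fin (n+1)) :=
    insert (i₀, Fin.last n) (S.image fun p => (p.1, p.2.castSucc)) with hS'def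
  obtain ⟨L, hL⟩ := exists_min_decomp m (n+1) S'
  have h := step_core m n i₀ S _ L hL
  calc BSRsimple m n + 1 = sosRank m n (simpleForm m n S) + 1 := by rw [hS]
    _ ≤ sosRank m (n+1) (simpleForm m (n+1) S') := h
    _ ≤ BSRsimple m (n+1) := le_BSR _ _ _

lemma BSR_step' (m n : ℕ) (hn : 0 < n) : BSRsimple m n + 1 ≤ BSRsimple (m+1) n := by
  rw [BSR_swap m n, BSR_swap (m+1) n]
  exact BSR_step n m hn

lemma eval_unit {m n R : ℕ} {S : Finset (Fin m × Fin n)} {L : Fin R → Fin m → Fin n → ℝ}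
    (hdec : IsSOSDecomp m n R (simpleForm m n S) L) (i : Fin m) (j : Fin n) :
    (if (i,j) ∈ S then (1:ℝ) else 0) = ∑ t, (L t i j)^2 := by
  have h := hdec (unit i) (unit j)
  have hform : simpleForm m n S (unit i) (unit j) = if (i,j) ∈ S then (1:ℝ) else 0 := by
    unfold simpleForm
    rw [Finset.sum_congr rfl (fun p (_ : p ∈ S) =>
      show (unit i p.1)^2 * (unit j p.2)^2 = if p = (i,j) then (1:ℝ) else 0 by
        rcases p with ⟨p1, p2⟩
        by_cases h1 : p1 = i <;> by_cases h2 : p2 = j <;>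
          simp [unit, h1, h2, Prod.ext_iff])]
    rw [Finset.sum_ite_eq' S (i,j) (fun _ => (1:ℝ))]
  rw [← hform, h]
  exact Finset.sum_congr rfl fun t _ => by rw [bil_unit]

lemma norm_one {m n R : ℕ} {S : Finset (Fin m × Fin n)} {L : Fin R → Fin m → Fin n → ℝ}
    (hdec : IsSOSDecomp m n R (simpleForm m n S) L) {i : Fin m} {j : Fin n}
    (hij : (i,j) ∈ S) : ∑ t, L t i j * L t i j = 1 := by
  have h := eval_unit hdec i j
  rw [if_pos hij] at h
  rw [Finset.sum_congr rfl fun t _ => (pow_two (L t i j)).symm]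
  exact h.symm

lemma off_zero {m n R : ℕ} {S : Finset (Fin m × Fin n)} {L : Fin R → Fin m → Fin n → ℝ}
    (hdec : IsSOSDecomp m n R (simpleForm m n S) L) {i : Fin m} {j : Fin n}
    (hij : (i,j) ∉ S) (t : Fin R) : L t i j = 0 := by
  have h := eval_unit hdec i j
  rw [if_neg hij] at h
  have h2 := (Finset.sum_eq_zero_iff_of_nonneg (fun t _ => sq_nonneg (L t i j))).mp h.symm
    t (Finset.mem_univ t)
  exact sq_eq_zero_iff.mp h2

lemma bil_two {m n R : ℕ} (L : Fin R → Fin m → Fin n → ℝ) (t : Fin R)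
    (i k : Fin m) (j l : Fin n) (ε δ : ℝ) :
    (∑ a, ∑ b, L t a b * (unit i a + ε * unit k a) * (unit j b + δ * unit l b))
      = L t i j + δ * L t i l + ε * L t k j + ε * δ * L t k l := by
  rw [Finset.sum_congr rfl (fun a (_ : a ∈ Finset.univ) => Finset.sum_congr rfl
    (fun b (_ : b ∈ Finset.univ) =>
      show L t a b * (unit i a + ε * unit k a) * (unit j b + δ * unit l b)
        = L t a b * unit i a * unit j b + δ * (L t a b * unit i a * unit l b)
          + ε * (L t a b * unit k a * unit j b) + ε * δ * (L t a b * unit k a * unit l b)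
        by ring))]
  simp only [Finset.sum_add_distrib, ← Finset.mul_sum]
  rw [bil_unit, bil_unit, bil_unit, bil_unit]

lemma form_two {m n : ℕ} (S : Finset (Fin m × Fin n)) (i k : Fin m) (j l : Fin n)
    (hik : i ≠ k) (hjl : j ≠ l) (ε δ : ℝ) (hε : ε^2 = 1) (hδ : δ^2 = 1) :
    simpleForm m n S (fun a => unit i a + ε * unit k a) (fun b => unit j b + δ * unit l b)
      = (if (i,j) ∈ S then (1:ℝ) else 0) + (if (i,l) ∈ S then 1 else 0)
        + (if (k,j) ∈ S then 1 else 0) + (if (k,l) ∈ S then 1 else 0) := by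
  have hx : ∀ a : Fin m, (unit i a + ε * unit k a)^2 = unit i a + unit k a := by
    intro a
    by_cases h1 : a = i
    · subst h1
      simp [unit, hik]
    · by_cases h2 : a = k
      · subst h2
        simp [unit, h1, hε]
      · simp [unit, h1, h2]
  have hy : ∀ b : Fin n, (unit j b + δ * unit l b)^2 = unit j b + unit l b := by
    intro b
    by_cases h1 : b = j
    · subst h1
      simp [unit, hjl]
    · by_cases h2 : b = l
      · subst h2
        simp [unit, h1, hδ]
      · simp [unit, h1, h2]
  have key : ∀ (i' : Fin m) (j' : Fin n),
      (∑ p ∈ S, unit i' p.1 * unit j' p.2) = if (i',j') ∈ S then (1:ℝ) else 0 := by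
    intro i' j'
    rw [Finset.sum_congr rfl (fun p (_ : p ∈ S) =>
      show unit i' p.1 * unit j' p.2 = if p = (i',j') then (1:ℝ) else 0 by
        rcases p with ⟨p1,p2⟩
        by_cases h1 : p1 = i' <;> by_cases h2 : p2 = j' <;> simp [unit, h1, h2, Prod.ext_iff])]
    exact Finset.sum_ite_eq' S (i',j') fun _ => 1
  unfold simpleForm
  rw [Finset.sum_congr rfl (fun p (_ : p ∈ S) =>
    show (unit i p.1 + ε * unit k p.1)^2 * (unit j p.2 + δ * unit l p.2)^2
      = unit i p.1 * unit j p.2 + unit i p.1 * unit l p.2 + unit k p.1 * unit j p.2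
        + unit k p.1 * unit l p.2 from by rw [hx, hy]; ring)]
  simp only [Finset.sum_add_distrib]
  rw [key, key, key, key]

lemma block_E {m n R : ℕ} {S : Finset (Fin m × Fin n)} {L : Fin R → Fin m → Fin n → ℝ}
    (hdec : IsSOSDecomp m n R (simpleForm m n S) L) (i k : Fin m) (j l : Fin n)
    (hik : i ≠ k) (hjl : j ≠ l) (ε δ : ℝ) (hε : ε^2 = 1) (hδ : δ^2 = 1) :
    (if (i,j) ∈ S then (1:ℝ) else 0) + (if (i,l) ∈ S then 1 else 0)
        + (if (k,j) ∈ S then 1 else 0) + (if (k,l) ∈ S then 1 else 0)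
      = (∑ t, L t i j * L t i j) + δ^2*(∑ t, L t i l * L t i l) + ε^2*(∑ t, L t k j * L t k j)
        + ε^2*δ^2*(∑ t, L t k l * L t k l)
        + 2*δ*(∑ t, L t i j * L t i l) + 2*ε*(∑ t, L t i j * L t k j)
        + (2*(ε*δ))*(∑ t, L t i j * L t k l) + (2*(ε*δ))*(∑ t, L t i l * L t k j)
        + (2*(ε*δ^2))*(∑ t, L t i l * L t k l) + (2*(ε^2*δ))*(∑ t, L t k j * L t k l) := by
  have h := hdec (fun a => unit i a + ε * unit k a) (fun b => unit j b + δ * unit l b)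
  beta_reduce at h
  rw [form_two S i k j l hik hjl ε δ hε hδ] at h
  rw [Finset.sum_congr rfl (fun t (_ : t ∈ Finset.univ) => by
    rw [bil_two L t i k j l ε δ])] at h
  rw [Finset.sum_congr rfl (fun t (_ : t ∈ Finset.univ) =>
    show (L t i j + δ * L t i l + ε * L t k j + ε * δ * L t k l)^2
      = L t i j * L t i j + δ^2*(L t i l * L t i l) + ε^2*(L t k j * L t k j)
        + ε^2*δ^2*(L t k l * L t k l)
        + 2*δ*(L t i j * L t i l) + 2*ε*(L t i j * L t k j)
        + (2*(ε*δ))*(L t i j * L t k l) + (2*(ε*δ))*(L t i l * L t k j)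
        + (2*(ε*δ^2))*(L t i l * L t k l) + (2*(ε^2*δ))*(L t k j * L t k l) from by ring)] at h
  simpa only [Finset.sum_add_distrib, ← Finset.mul_sum] using h

lemma ortho_three {m n R : ℕ} {S : Finset (Fin m × Fin n)} {L : Fin R → Fin m → Fin n → ℝ}
    (hdec : IsSOSDecomp m n R (simpleForm m n S) L) {i k : Fin m} {j l : Fin n}
    (hik : i ≠ k) (hjl : j ≠ l) (h1 : (i,j) ∈ S) (h2 : (i,l) ∈ S) (h3 : (k,l) ∈ S)
    (h4 : (k,j) ∉ S) :
    (∑ t, L t i j * L t i l = 0) ∧ (∑ t, L t i j * L t k l = 0)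
      ∧ (∑ t, L t i l * L t k l = 0) := by
  have hg : ∀ t, L t k j = 0 := fun t => off_zero hdec h4 t
  have z1 : (∑ t, L t k j * L t k j) = 0 := by simp [hg]
  have z2 : (∑ t, L t i j * L t k j) = 0 := by simp [hg]
  have z3 : (∑ t, L t i l * L t k j) = 0 := by simp [hg]
  have z4 : (∑ t, L t k j * L t k l) = 0 := by simp [hg]
  have E := fun (ε δ : ℝ) (hε : ε^2 = 1) (hδ : δ^2 = 1) => by
    have h := block_E hdec i k j l hik hjl ε δ hε hδ
    rw [if_pos h1, if_pos h2, if_neg h4, if_pos h3, z1, z2, z3, z4] at h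
    exact h
  have E11 := E 1 1 (by norm_num) (by norm_num)
  have E1m := E 1 (-1) (by norm_num) (by norm_num)
  have Em1 := E (-1) 1 (by norm_num) (by norm_num)
  have Emm := E (-1) (-1) (by norm_num) (by norm_num)
  norm_num at E11 E1m Em1 Emm
  refine ⟨by linarith, by linarith, by linarith⟩

lemma ortho_diag {m n R : ℕ} {S : Finset (Fin m × Fin n)} {L : Fin R → Fin m → Fin n → ℝ}
    (hdec : IsSOSDecomp m n R (simpleForm m n S) L) {i k : Fin m} {j l : Fin n}
    (hik : i ≠ k) (hjl : j ≠ l) (h1 : (i,j) ∈ S) (h2 : (k,l) ∈ S) (h3 : (i,l) ∉ S)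
    (h4 : (k,j) ∉ S) :
    ∑ t, L t i j * L t k l = 0 := by
  have hg : ∀ t, L t k j = 0 := fun t => off_zero hdec h4 t
  have hw : ∀ t, L t i l = 0 := fun t => off_zero hdec h3 t
  have z1 : (∑ t, L t k j * L t k j) = 0 := by simp [hg]
  have z2 : (∑ t, L t i j * L t k j) = 0 := by simp [hg]
  have z3 : (∑ t, L t i l * L t k j) = 0 := by simp [hg]
  have z4 : (∑ t, L t k j * L t k l) = 0 := by simp [hg]
  have z5 : (∑ t, L t i l * L t i l) = 0 := by simp [hw]
  have z6 : (∑ t, L t i j * L t i l) = 0 := by simp [hw]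
  have z7 : (∑ t, L t i l * L t k l) = 0 := by simp [hw]
  have E := fun (ε δ : ℝ) (hε : ε^2 = 1) (hδ : δ^2 = 1) => by
    have h := block_E hdec i k j l hik hjl ε δ hε hδ
    rw [if_pos h1, if_pos h2, if_neg h3, if_neg h4, z1, z2, z3, z4, z5, z6, z7] at h
    exact h
  have E11 := E 1 1 (by norm_num) (by norm_num)
  have E1m := E 1 (-1) (by norm_num) (by norm_num)
  norm_num at E11 E1m
  linarith

def S0 : Finset (Fin 3 × Fin 3) := {(0,0), (1,1), (2,2), (0,1), (1,2), (2,0)}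

set_option maxHeartbeats 2000000 in
lemma rank_ge_six {R : ℕ} (L : Fin R → Fin 3 → Fin 3 → ℝ)
    (hdec : IsSOSDecomp 3 3 R (simpleForm 3 3 S0) L) : 6 ≤ R := by
  have na : (∑ t, L t 0 0 * L t 0 0) = 1 := norm_one hdec (by decide)
  have nb : (∑ t, L t 1 1 * L t 1 1) = 1 := norm_one hdec (by decide)
  have nc : (∑ t, L t 2 2 * L t 2 2) = 1 := norm_one hdec (by decide)
  have nd : (∑ t, L t 0 1 * L t 0 1) = 1 := norm_one hdec (by decide)
  have ne' : (∑ t, L t 1 2 * L t 1 2) = 1 := norm_one hdec (by decide)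
  have nf : (∑ t, L t 2 0 * L t 2 0) = 1 := norm_one hdec (by decide)
  obtain ⟨had, hab, hdb⟩ := ortho_three hdec (i := 0) (k := 1) (j := 0) (l := 1)
    (by decide) (by decide) (by decide) (by decide) (by decide) (by decide)
  obtain ⟨hbe, hbc, hec⟩ := ortho_three hdec (i := 1) (k := 2) (j := 1) (l := 2)
    (by decide) (by decide) (by decide) (by decide) (by decide) (by decide)
  obtain ⟨hcf, hca, hfa⟩ := ortho_three hdec (i := 2) (k := 0) (j := 2) (l := 0)
    (by decide) (by decide) (by decide) (by decide) (by decide) (by decide)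
  obtain ⟨heb, hed, hbd⟩ := ortho_three hdec (i := 1) (k := 0) (j := 2) (l := 1)
    (by decide) (by decide) (by decide) (by decide) (by decide) (by decide)
  obtain ⟨hfc, hfe, hce⟩ := ortho_three hdec (i := 2) (k := 1) (j := 0) (l := 2)
    (by decide) (by decide) (by decide) (by decide) (by decide) (by decide)
  obtain ⟨hda, hdf, haf⟩ := ortho_three hdec (i := 0) (k := 2) (j := 1) (l := 0)
    (by decide) (by decide) (by decide) (by decide) (by decide) (by decide)
  have hae : (∑ t, L t 0 0 * L t 1 2) = 0 := ortho_diag hdec (i := 0) (k := 1) (j := 0) (l := 2)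
    (by decide) (by decide) (by decide) (by decide) (by decide) (by decide)
  have hbf : (∑ t, L t 1 1 * L t 2 0) = 0 := ortho_diag hdec (i := 1) (k := 2) (j := 1) (l := 0)
    (by decide) (by decide) (by decide) (by decide) (by decide) (by decide)
  have hcd : (∑ t, L t 2 2 * L t 0 1) = 0 := ortho_diag hdec (i := 2) (k := 0) (j := 2) (l := 1)
    (by decide) (by decide) (by decide) (by decide) (by decide) (by decide)
  have flip : ∀ (p q r s : Fin 3), (∑ t, L t p q * L t r s) = ∑ t, L t r s * L t p q :=
    fun p q r s => Finset.sum_congr rfl fun t _ => mul_comm _ _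
  set v : Fin 6 → EuclideanSpace ℝ (Fin R) :=
    ![WithLp.toLp 2 (fun t => L t 0 0), WithLp.toLp 2 (fun t => L t 1 1), WithLp.toLp 2 (fun t => L t 2 2),
      WithLp.toLp 2 (fun t => L t 0 1), WithLp.toLp 2 (fun t => L t 1 2), WithLp.toLp 2 (fun t => L t 2 0)] with hv
  have hortho : Orthonormal ℝ v := by
    rw [orthonormal_iff_ite]
    intro p q
    fin_cases p <;> fin_cases q <;>
      simp only [hv, Matrix.cons_val_zero, Matrix.cons_val_one, Matrix.head_cons,
        Matrix.cons_val_two, Matrix.tail_cons, Matrix.cons_val_three, Matrix.cons_val_four,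
        PiLp.inner_apply, PiLp.toLp_apply, RCLike.inner_apply, conj_trivial, Fin.isValue] <;>
      norm_num <;>
      first
        | exact na | exact nb | exact nc | exact nd | exact ne' | exact nf
        | exact hab | exact had | exact hdb | exact hbe | exact hbc | exact hec
        | exact hcf | exact hca | exact hfa | exact heb | exact hed | exact hbd
        | exact hfc | exact hfe | exact hce | exact hda | exact hdf | exact haf
        | exact hae | exact hbf | exact hcd
        | (rw [flip]; first
            | exact hab | exact had | exact hdb | exact hbe | exact hbc | exact hec
            | exact hcf | exact hca | exact hfa | exact heb | exact hed | exact hbd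
            | exact hfc | exact hfe | exact hce | exact hda | exact hdf | exact haf
            | exact hae | exact hbf | exact hcd)
  have hli := hortho.linearIndependent
  have hcard := hli.fintype_card_le_finrank
  simpa [finrank_euclideanSpace_fin] using hcard

lemma base33 : 6 ≤ BSRsimple 3 3 := by
  obtain ⟨L, hL⟩ := exists_min_decomp 3 3 S0
  exact le_trans (rank_ge_six L hL) (le_BSR 3 3 S0)

/-- for `m, n ≥ 3`, `BSR_simple(m, n+1) ≥ BSR_simple(m, n) + 1`,
and consequently `BSR_simple(m, n) ≥ m + n`. -/
theorem BSRsimple_monotone_and_lower_bound (m n : ℕ) (hm : 3 ≤ m) (hn : 3 ≤ n) :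
    BSRsimple m n + 1 ≤ BSRsimple m (n + 1) ∧ m + n ≤ BSRsimple m n := by
  constructor
  · exact BSR_step m n (by omega)
  · have grow_n : ∀ (m' : ℕ), 0 < m' → ∀ k, BSRsimple m' 3 + k ≤ BSRsimple m' (3 + k) := by
      intro m' hm' k
      induction k with
      | zero => simp
      | succ k ih =>
        have := BSR_step m' (3 + k) hm'
        have : BSRsimple m' (3 + k) + 1 ≤ BSRsimple m' (3 + (k + 1)) := by
          have h := BSR_step m' (3 + k) hm'
          simpa [Nat.add_assoc] using h
        omega
    have grow_m : ∀ (n' : ℕ), 0 < n' → ∀ k, BSRsimple 3 n' + k ≤ BSRsimple (3 + k) n' := by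
      intro n' hn' k
      induction k with
      | zero => simp
      | succ k ih =>
        have h : BSRsimple (3 + k) n' + 1 ≤ BSRsimple (3 + (k + 1)) n' := by
          have h := BSR_step' (3 + k) n' hn'
          simpa [Nat.add_assoc] using h
        omega
    obtain ⟨j, rfl⟩ : ∃ j, m = 3 + j := ⟨m - 3, by omega⟩
    obtain ⟨k, rfl⟩ : ∃ k, n = 3 + k := ⟨n - 3, by omega⟩
    have h1 : 6 ≤ BSRsimple 3 3 := base33
    have h2 := grow_n 3 (by norm_num) k
    have h3 := grow_m (3 + k) (by omega) j
    omega
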